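/- For all n ≥ 2, binomial(2n-2, n-2) = sum over all nonnegative integer quadruples (a,b,c,d) with a+b+c+d = n-2 of binomial(a+c, a) · C_{a+b+1, a+1} · C_{c+d+1, c+1}, where C_{m,k} = (k/(2m-k)) · binomial(2m-k, m) is the Catalan convolution. -/

import Mathlib

/-- The Catalan convolution `C_{m,k} = (k/(2m-k)) · binomial(2m-k, m)`. -/
def catalanConv (m k : ℕ) : ℚ := (k : ℚ) / ((2 * m - k : ℕ) : ℚ) * ((2 * m - k).choose m : ℚ)

/-- Helper: `gg m k` is the coefficient of `x^m` in `C(x)^k`, `C` the Catalan GF. -/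
def gg (m k : ℕ) : ℚ :=
  if k = 0 then (if m = 0 then 1 else 0)
  else (k : ℚ) / ((2 * m + k : ℕ) : ℚ) * ((2 * m + k).choose (m + k) : ℚ)

lemma gg_zero_left (k : ℕ) : gg 0 k = 1 := by
  rcases k with _ | k
  · simp [gg]
  · simp [gg]
    exact (by positivity : (k : ℚ) + 1 ≠ 0)

lemma gg_formula (m k : ℕ) (h : ¬(m = 0 ∧ k = 0)) :
    gg m k = (k : ℚ) / ((2 * m + k : ℕ) : ℚ) * ((2 * m + k).choose (m + k) : ℚ) := by
  rcases k with _ | k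
  · rcases m with _ | m
    · exact absurd ⟨rfl, rfl⟩ h
    · simp [gg]
  · simp [gg]

lemma gg_succ (m k : ℕ) :
    gg m (k + 1) = gg m k + (if m = 0 then 0 else gg (m - 1) (k + 2)) := by
  rcases m with _ | m
  · simp [gg_zero_left]
  · simp only [Nat.succ_ne_zero, if_false, Nat.add_sub_cancel]
    rw [gg_formula _ _ (by simp), gg_formula _ _ (by simp), gg_formula _ _ (by simp)]
    have e1 : 2 * (m + 1) + (k + 1) = (2 * m + k + 2) + 1 := by omega
    have e2 : 2 * (m + 1) + k = 2 * m + k + 2 := by omega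
    have e3 : 2 * m + (k + 2) = 2 * m + k + 2 := by omega
    have e4 : (m + 1) + (k + 1) = (m + k + 1) + 1 := by omega
    have e5 : (m + 1) + k = m + k + 1 := by omega
    have e6 : m + (k + 2) = (m + k + 1) + 1 := by omega
    rw [e1, e2, e3, e4, e5, e6]
    have pascal : ((2 * m + k + 2) + 1).choose ((m + k + 1) + 1)
        = (2 * m + k + 2).choose (m + k + 1) + (2 * m + k + 2).choose ((m + k + 1) + 1) :=
      Nat.choose_succ_succ _ _
    rw [pascal]
    have keyQ : ((2 * m + k + 2).choose ((m + k + 1) + 1) : ℚ) * ((m : ℚ) + k + 2)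
        = ((2 * m + k + 2).choose (m + k + 1) : ℚ) * ((m : ℚ) + 1) := by
      have h1 := Nat.choose_succ_right_eq (2 * m + k + 2) (m + k + 1)
      have hnr : 2 * m + k + 2 - (m + k + 1) = m + 1 := by omega
      rw [hnr] at h1
      have h2 := congrArg (Nat.cast : ℕ → ℚ) h1
      push_cast at h2
      linarith [h2]
    have hne1 : (((2 * m + k + 2) + 1 : ℕ) : ℚ) ≠ 0 := by positivity
    have hne2 : ((2 * m + k + 2 : ℕ) : ℚ) ≠ 0 := by positivity
    field_simp
    push_cast
    linear_combination (-2 : ℚ) * keyQ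

lemma gg_conv (M p q : ℕ) :
    ∑ b ∈ Finset.range (M + 1), gg b p * gg (M - b) q = gg M (p + q) := by
  induction M using Nat.strong_induction_on generalizing p with
  | _ M ih =>
    induction p with
    | zero =>
      rw [Finset.sum_eq_single 0]
      · simp [gg_zero_left]
      · intro b _ hb0
        have : gg b 0 = 0 := by simp [gg, hb0]
        simp [this]
      · intro h; exact absurd (Finset.mem_range.mpr (by omega)) h
    | succ p ihp =>
      have step : ∀ b, gg b (p + 1) * gg (M - b) q
          = gg b p * gg (M - b) q
            + (if b = 0 then 0 else gg (b - 1) (p + 2)) * gg (M - b) q := by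
        intro b; rw [gg_succ]; ring
      rw [Finset.sum_congr rfl (fun b _ => step b), Finset.sum_add_distrib, ihp]
      rcases M with _ | M
      · simp [gg_zero_left]
      · rw [Finset.sum_range_succ']
        have hterm : ∀ b ∈ Finset.range (M + 1),
            (if b + 1 = 0 then 0 else gg (b + 1 - 1) (p + 2)) * gg (M + 1 - (b + 1)) q
              = gg b (p + 2) * gg (M - b) q := by
          intro b _
          rw [if_neg (Nat.succ_ne_zero b), Nat.add_sub_cancel, Nat.succ_sub_succ]
        rw [Finset.sum_congr rfl hterm, ih M (by omega) (p + 2)]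
        simp only [reduceIte, zero_mul, add_zero]
        have e1 : p + 1 + q = (p + q) + 1 := by omega
        have e2 : p + 2 + q = (p + q) + 2 := by omega
        rw [e1, e2, gg_succ (M + 1) (p + q)]
        simp

lemma gg_D (N j : ℕ) :
    ∑ s ∈ Finset.range (N + 1), (2 : ℚ) ^ s * gg (N - s) (s + j + 1)
      = ((2 * N + j + 1).choose N : ℚ) := by
  induction N using Nat.strong_induction_on generalizing j with
  | _ N ih =>
    rcases N with _ | N
    · simp [gg_zero_left]
    · induction j with
      | zero =>
        have step : ∀ s, (2 : ℚ) ^ s * gg (N + 1 - s) (s + 0 + 1)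
            = (2 : ℚ) ^ s * gg (N + 1 - s) s
              + (2 : ℚ) ^ s * (if N + 1 - s = 0 then 0 else gg (N - s) (s + 2)) := by
          intro s
          have e : s + 0 + 1 = s + 1 := by omega
          rw [e, gg_succ]
          have e2 : N + 1 - s - 1 = N - s := by omega
          rw [e2]; ring
        rw [Finset.sum_congr rfl (fun s _ => step s), Finset.sum_add_distrib]
        have h1 : ∑ s ∈ Finset.range (N + 2), (2 : ℚ) ^ s * gg (N + 1 - s) s
            = 2 * ((2 * N + 0 + 1).choose N : ℚ) := by
          rw [Finset.sum_range_succ']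
          have hz : gg (N + 1) 0 = 0 := by simp [gg]
          have hterm : ∀ s ∈ Finset.range (N + 1), (2:ℚ) ^ (s + 1) * gg (N + 1 - (s + 1)) (s + 1)
              = 2 * ((2:ℚ) ^ s * gg (N - s) (s + 0 + 1)) := by
            intro s _
            rw [Nat.succ_sub_succ]
            have : s + 0 + 1 = s + 1 := by omega
            rw [this]; ring
          rw [Finset.sum_congr rfl hterm, ← Finset.mul_sum, ih N (by omega) 0]
          simp [hz]
        have h2 : ∑ s ∈ Finset.range (N + 2),
              (2 : ℚ) ^ s * (if N + 1 - s = 0 then 0 else gg (N - s) (s + 2))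
            = ((2 * N + 1 + 1).choose N : ℚ) := by
          rw [Finset.sum_range_succ]
          simp only [Nat.sub_self, reduceIte, mul_zero, add_zero]
          have : ∀ s ∈ Finset.range (N + 1),
              (2 : ℚ) ^ s * (if N + 1 - s = 0 then 0 else gg (N - s) (s + 2))
                = (2 : ℚ) ^ s * gg (N - s) (s + 1 + 1) := by
            intro s hs
            rw [if_neg (by simp at hs; omega)]
          rw [Finset.sum_congr rfl this, ih N (by omega) 1]
        rw [h1, h2]
        have p1 : (2 * (N + 1) + 0 + 1).choose (N + 1)
            = (2 * N + 2).choose N + (2 * N + 2).choose (N + 1) := by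
          have : 2 * (N + 1) + 0 + 1 = (2 * N + 2) + 1 := by omega
          rw [this, Nat.choose_succ_succ]
        have p2 : (2 * N + 2).choose (N + 1) = (2 * N + 1).choose N + (2 * N + 1).choose (N + 1) := by
          have : 2 * N + 2 = (2 * N + 1) + 1 := by omega
          rw [this, Nat.choose_succ_succ]
        have p3 : (2 * N + 1).choose (N + 1) = (2 * N + 1).choose N := by
          rw [← Nat.choose_symm (by omega)]
          congr 1; omega
        have e0 : 2 * N + 0 + 1 = 2 * N + 1 := by omega
        have e1 : 2 * N + 1 + 1 = 2 * N + 2 := by omega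
        rw [e0, e1, p1, p2, p3]
        push_cast; ring
      | succ j ihj =>
        have step : ∀ s, (2 : ℚ) ^ s * gg (N + 1 - s) (s + (j + 1) + 1)
            = (2 : ℚ) ^ s * gg (N + 1 - s) (s + j + 1)
              + (2 : ℚ) ^ s * (if N + 1 - s = 0 then 0 else gg (N - s) (s + j + 3)) := by
          intro s
          have e : s + (j + 1) + 1 = (s + j + 1) + 1 := by omega
          rw [e, gg_succ]
          have e2 : N + 1 - s - 1 = N - s := by omega
          have e3 : s + j + 1 + 2 = s + j + 3 := by omega
          rw [e2, e3]; ring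
        rw [Finset.sum_congr rfl (fun s _ => step s), Finset.sum_add_distrib, ihj]
        have h2 : ∑ s ∈ Finset.range (N + 2),
              (2 : ℚ) ^ s * (if N + 1 - s = 0 then 0 else gg (N - s) (s + j + 3))
            = ((2 * N + j + 3).choose N : ℚ) := by
          rw [Finset.sum_range_succ]
          simp only [Nat.sub_self, reduceIte, mul_zero, add_zero]
          have : ∀ s ∈ Finset.range (N + 1),
              (2 : ℚ) ^ s * (if N + 1 - s = 0 then 0 else gg (N - s) (s + j + 3))
                = (2 : ℚ) ^ s * gg (N - s) (s + (j + 2) + 1) := by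
            intro s hs
            rw [if_neg (by simp at hs; omega)]
            have : s + (j + 2) + 1 = s + j + 3 := by omega
            rw [this]
          rw [Finset.sum_congr rfl this, ih N (by omega) (j + 2)]
          have e : 2 * N + (j + 2) + 1 = 2 * N + j + 3 := by omega
          rw [e]
        rw [h2]
        have p1 : (2 * (N + 1) + (j + 1) + 1).choose (N + 1)
            = (2 * N + j + 3).choose N + (2 * N + j + 3).choose (N + 1) := by
          have : 2 * (N + 1) + (j + 1) + 1 = (2 * N + j + 3) + 1 := by omega
          rw [this, Nat.choose_succ_succ]
        have e1 : 2 * (N + 1) + j + 1 = 2 * N + j + 3 := by omega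
        rw [p1, e1]
        push_cast; ring

theorem catalanConv_interleaving_identity (n : ℕ) (hn : 2 ≤ n) :
    ((2 * n - 2).choose (n - 2) : ℚ) =
      ∑ t ∈ Finset.Nat.antidiagonalTuple 4 (n - 2),
        ((t 0 + t 2).choose (t 0) : ℚ) *
          catalanConv (t 0 + t 1 + 1) (t 0 + 1) *
          catalanConv (t 2 + t 3 + 1) (t 2 + 1) := by
  set N := n - 2 with hN
  have hcc : ∀ a b : ℕ, catalanConv (a + b + 1) (a + 1) = gg b (a + 1) := by
    intro a b
    have h1 : 2 * (a + b + 1) - (a + 1) = 2 * b + (a + 1) := by omega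
    rw [catalanConv, h1, gg_formula b (a + 1) (by simp)]
    have e : b + (a + 1) = a + b + 1 := by omega
    rw [e]
  have hrw : ∀ t : Fin 4 → ℕ,
      ((t 0 + t 2).choose (t 0) : ℚ) * catalanConv (t 0 + t 1 + 1) (t 0 + 1) *
          catalanConv (t 2 + t 3 + 1) (t 2 + 1)
        = ((t 0 + t 2).choose (t 0) : ℚ) * gg (t 1) (t 0 + 1) * gg (t 3) (t 2 + 1) := by
    intro t; rw [hcc, hcc]
  rw [Finset.sum_congr rfl (fun t _ => hrw t)]
  have hbij : ∑ t ∈ Finset.Nat.antidiagonalTuple 4 N,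
        ((t 0 + t 2).choose (t 0) : ℚ) * gg (t 1) (t 0 + 1) * gg (t 3) (t 2 + 1)
      = ∑ x ∈ (Finset.range (N + 1)).sigma
            (fun i => Finset.range (i + 1) ×ˢ Finset.range (N - i + 1)),
          ((x.1).choose (x.2.1) : ℚ) * gg (x.2.2) (x.2.1 + 1)
            * gg (N - x.1 - x.2.2) ((x.1 - x.2.1) + 1) := by
    apply Finset.sum_nbij' (fun t => (⟨t 0 + t 2, (t 0, t 1)⟩ : Σ _ : ℕ, ℕ × ℕ))
      (fun x => ![x.2.1, x.2.2, x.1 - x.2.1, N - x.1 - x.2.2])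
    · intro t ht
      rw [Finset.Nat.mem_antidiagonalTuple, Fin.sum_univ_four] at ht
      simp only [Finset.mem_sigma, Finset.mem_product, Finset.mem_range]
      omega
    · intro x hx
      simp only [Finset.mem_sigma, Finset.mem_product, Finset.mem_range] at hx
      rw [Finset.Nat.mem_antidiagonalTuple, Fin.sum_univ_four]
      simp only [Matrix.cons_val_zero, Matrix.cons_val_one, Matrix.head_cons,
        Matrix.cons_val_two, Matrix.tail_cons, Matrix.cons_val_three]
      omega
    · intro t ht
      rw [Finset.Nat.mem_antidiagonalTuple, Fin.sum_univ_four] at ht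
      have e1 : t 0 + t 2 - t 0 = t 2 := by omega
      have e2 : N - (t 0 + t 2) - t 1 = t 3 := by omega
      show ![t 0, t 1, t 0 + t 2 - t 0, N - (t 0 + t 2) - t 1] = t
      rw [e1, e2]
      funext i
      fin_cases i <;> rfl
    · intro x hx
      simp only [Finset.mem_sigma, Finset.mem_product, Finset.mem_range] at hx
      show (⟨x.2.1 + (x.1 - x.2.1), (x.2.1, x.2.2)⟩ : Σ _ : ℕ, ℕ × ℕ) = x
      have e : x.2.1 + (x.1 - x.2.1) = x.1 := by omega
      rw [e]
    · intro t ht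
      rw [Finset.Nat.mem_antidiagonalTuple, Fin.sum_univ_four] at ht
      have e1 : t 0 + t 2 - t 0 = t 2 := by omega
      have e2 : N - (t 0 + t 2) - t 1 = t 3 := by omega
      simp only [e1, e2]
  rw [hbij, Finset.sum_sigma]
  have hinner : ∀ i ∈ Finset.range (N + 1),
      ∑ x ∈ Finset.range (i + 1) ×ˢ Finset.range (N - i + 1),
          ((i.choose x.1 : ℚ) * gg x.2 (x.1 + 1) * gg (N - i - x.2) ((i - x.1) + 1))
        = (2 : ℚ) ^ i * gg (N - i) (i + 1 + 1) := by
    intro i hi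
    rw [Finset.sum_product]
    have hin2 : ∀ a ∈ Finset.range (i + 1),
        ∑ b ∈ Finset.range (N - i + 1),
            (i.choose a : ℚ) * gg b (a + 1) * gg (N - i - b) ((i - a) + 1)
          = (i.choose a : ℚ) * gg (N - i) (i + 1 + 1) := by
      intro a ha
      have : ∀ b ∈ Finset.range (N - i + 1),
          (i.choose a : ℚ) * gg b (a + 1) * gg (N - i - b) ((i - a) + 1)
            = (i.choose a : ℚ) * (gg b (a + 1) * gg (N - i - b) ((i - a) + 1)) := by
        intro b _; ring
      rw [Finset.sum_congr rfl this, ← Finset.mul_sum, gg_conv (N - i) (a + 1) ((i - a) + 1)]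
      have ha' : a ≤ i := by simpa using Nat.lt_succ_iff.mp (Finset.mem_range.mp ha)
      have e : (a + 1) + ((i - a) + 1) = i + 1 + 1 := by omega
      rw [e]
    rw [Finset.sum_congr rfl hin2, ← Finset.sum_mul]
    congr 1
    have := congrArg (Nat.cast : ℕ → ℚ) (Nat.sum_range_choose i)
    push_cast at this
    exact this
  rw [Finset.sum_congr rfl hinner, gg_D N 1]
  have e : 2 * n - 2 = 2 * N + 1 + 1 := by omega
  have e2 : n - 2 = N := rfl
  rw [e]
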